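/- Let $r = \frac{1 + \sqrt{7}}{4} + i\,\frac{-1 + \sqrt{7}}{4}$, and let $z_1, z_2, z_3, z_4$ be Gaussian integers with $|z_1|^2 + |z_2|^2 \neq |z_3|^2 + |z_4|^2$. Define $D = r(|z_3|^2 + |z_4|^2) - i\overline{r}(|z_1|^2 + |z_2|^2) + (z_1\overline{z_3} + z_2\overline{z_4}) - i(\overline{z_1} z_3 + \overline{z_2} z_4)$. Then $|D|^2 \geq 7/8$. -/

import Mathlib

open Complex ComplexConjugate

/-- A Gaussian integer: a complex number whose real and imaginary parts are integers. -/
def IsGaussianInt (z : ℂ) : Prop := ∃ a b : ℤ, z = (a : ℂ) + (b : ℂ) * Complex.I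

/-- The optimized design coefficient `r = (1+√7)/4 + i(-1+√7)/4`. -/
noncomputable def rOpt : ℂ :=
  (((1 + Real.sqrt 7) / 4 : ℝ) : ℂ) + (((-1 + Real.sqrt 7) / 4 : ℝ) : ℂ) * Complex.I

set_option maxHeartbeats 1000000 in
theorem stmt_10 (z₁ z₂ z₃ z₄ : ℂ)
    (h₁ : IsGaussianInt z₁) (h₂ : IsGaussianInt z₂)
    (h₃ : IsGaussianInt z₃) (h₄ : IsGaussianInt z₄)
    (hne : Complex.normSq z₁ + Complex.normSq z₂ ≠ Complex.normSq z₃ + Complex.normSq z₄) :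
    ‖
        (rOpt * ((Complex.normSq z₃ : ℂ) + (Complex.normSq z₄ : ℂ)) -
          Complex.I * conj rOpt * ((Complex.normSq z₁ : ℂ) + (Complex.normSq z₂ : ℂ)) +
          (z₁ * conj z₃ + z₂ * conj z₄) -
          Complex.I * (conj z₁ * z₃ + conj z₂ * z₄))‖ ^ 2 ≥ 7 / 8 := by
  obtain ⟨a1, b1, rfl⟩ := h₁
  obtain ⟨a2, b2, rfl⟩ := h₂
  obtain ⟨a3, b3, rfl⟩ := h₃
  obtain ⟨a4, b4, rfl⟩ := h₄
  set s : ℝ := Real.sqrt 7 with hs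
  have hs2 : s ^ 2 = 7 := Real.sq_sqrt (by norm_num)
  set N1 : ℝ := (a1:ℝ)^2 + (b1:ℝ)^2 + (a2:ℝ)^2 + (b2:ℝ)^2 with hN1
  set N3 : ℝ := (a3:ℝ)^2 + (b3:ℝ)^2 + (a4:ℝ)^2 + (b4:ℝ)^2 with hN3
  set k : ℝ := ((a1:ℝ)*a3 + (b1:ℝ)*b3 + (a2:ℝ)*a4 + (b2:ℝ)*b4)
      - ((b1:ℝ)*a3 - (a1:ℝ)*b3 + (b2:ℝ)*a4 - (a2:ℝ)*b4) with hk
  -- the difference of norms is a nonzero integer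
  have hm1 : (1:ℝ) ≤ (N3 - N1)^2 := by
    have hz : ((a3^2+b3^2+a4^2+b4^2) - (a1^2+b1^2+a2^2+b2^2) : ℤ) ≠ 0 := by
      intro h
      apply hne
      simp only [Complex.normSq_apply, Complex.add_re, Complex.add_im, Complex.mul_re,
        Complex.mul_im, Complex.I_re, Complex.I_im, Complex.intCast_re, Complex.intCast_im]
      have : ((a3^2+b3^2+a4^2+b4^2 : ℤ) : ℝ) = ((a1^2+b1^2+a2^2+b2^2 : ℤ) : ℝ) := by
        exact_mod_cast congrArg (fun n : ℤ => (n:ℝ)) (sub_eq_zero.mp h)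
      push_cast at this
      nlinarith [this]
    have h1 : (1:ℤ) ≤ ((a3^2+b3^2+a4^2+b4^2) - (a1^2+b1^2+a2^2+b2^2))^2 := by
      rcases lt_or_gt_of_ne hz with h | h <;> nlinarith
    have h1' : (1:ℝ) ≤ (((a3:ℝ)^2+(b3:ℝ)^2+(a4:ℝ)^2+(b4:ℝ)^2) - ((a1:ℝ)^2+(b1:ℝ)^2+(a2:ℝ)^2+(b2:ℝ)^2))^2 := by
      exact_mod_cast h1
    rw [hN1, hN3]; nlinarith [h1']
  rw [Complex.sq_norm, Complex.normSq_apply]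
  have hre : (rOpt * ((Complex.normSq ((a3:ℂ) + (b3:ℂ)*Complex.I) : ℂ) + (Complex.normSq ((a4:ℂ) + (b4:ℂ)*Complex.I) : ℂ)) -
          Complex.I * conj rOpt * ((Complex.normSq ((a1:ℂ) + (b1:ℂ)*Complex.I) : ℂ) + (Complex.normSq ((a2:ℂ) + (b2:ℂ)*Complex.I) : ℂ)) +
          (((a1:ℂ) + (b1:ℂ)*Complex.I) * conj ((a3:ℂ) + (b3:ℂ)*Complex.I) + ((a2:ℂ) + (b2:ℂ)*Complex.I) * conj ((a4:ℂ) + (b4:ℂ)*Complex.I)) -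
          Complex.I * (conj ((a1:ℂ) + (b1:ℂ)*Complex.I) * ((a3:ℂ) + (b3:ℂ)*Complex.I) + conj ((a2:ℂ) + (b2:ℂ)*Complex.I) * ((a4:ℂ) + (b4:ℂ)*Complex.I))).re
      = (1+s)/4 * N3 - (-1+s)/4 * N1 + k := by
    simp only [Complex.normSq_apply, rOpt, Complex.add_re, Complex.add_im, Complex.mul_re,
      Complex.mul_im, Complex.sub_re, Complex.sub_im, Complex.I_re, Complex.I_im,
      Complex.ofReal_re, Complex.ofReal_im, Complex.intCast_re, Complex.intCast_im,
      Complex.conj_re, Complex.conj_im, Complex.ofReal_add, map_add, map_mul,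
      Complex.conj_I, Complex.conj_ofReal, map_intCast, Complex.neg_re, Complex.neg_im]
    rw [hN1, hN3, hk]; ring
  have him : (rOpt * ((Complex.normSq ((a3:ℂ) + (b3:ℂ)*Complex.I) : ℂ) + (Complex.normSq ((a4:ℂ) + (b4:ℂ)*Complex.I) : ℂ)) -
          Complex.I * conj rOpt * ((Complex.normSq ((a1:ℂ) + (b1:ℂ)*Complex.I) : ℂ) + (Complex.normSq ((a2:ℂ) + (b2:ℂ)*Complex.I) : ℂ)) +
          (((a1:ℂ) + (b1:ℂ)*Complex.I) * conj ((a3:ℂ) + (b3:ℂ)*Complex.I) + ((a2:ℂ) + (b2:ℂ)*Complex.I) * conj ((a4:ℂ) + (b4:ℂ)*Complex.I)) -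
          Complex.I * (conj ((a1:ℂ) + (b1:ℂ)*Complex.I) * ((a3:ℂ) + (b3:ℂ)*Complex.I) + conj ((a2:ℂ) + (b2:ℂ)*Complex.I) * ((a4:ℂ) + (b4:ℂ)*Complex.I))).im
      = (-1+s)/4 * N3 - (1+s)/4 * N1 - k := by
    simp only [Complex.normSq_apply, rOpt, Complex.add_re, Complex.add_im, Complex.mul_re,
      Complex.mul_im, Complex.sub_re, Complex.sub_im, Complex.I_re, Complex.I_im,
      Complex.ofReal_re, Complex.ofReal_im, Complex.intCast_re, Complex.intCast_im,
      Complex.conj_re, Complex.conj_im, Complex.ofReal_add, map_add, map_mul,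
      Complex.conj_I, Complex.conj_ofReal, map_intCast, Complex.neg_re, Complex.neg_im]
    rw [hN1, hN3, hk]; ring
  rw [hre, him]
  set X : ℝ := (1+s)/4 * N3 - (-1+s)/4 * N1 + k with hX
  set Y : ℝ := (-1+s)/4 * N3 - (1+s)/4 * N1 - k with hY
  have key : (X + Y)^2 = 7/4 * (N3 - N1)^2 := by
    rw [hX, hY]
    linear_combination ((N3 - N1)^2/4) * hs2
  have hgoal : X * X + Y * Y = ((X + Y)^2 + (X - Y)^2) / 2 := by ring
  rw [hgoal]
  linarith [key, hm1, sq_nonneg (X - Y)]
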